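/- arXiv:cs/0702124 — 11 statements merged into one kernel-verified Lean document; each statement's English description precedes it below -/
import Mathlib

section
/- Σ_{v∈V} C(d̂(v),2) + Σ_{{u,v}∈E(H)} d̂(u)·d̂(v) ≤ S·d_max²/2. (In other words, the total number of unsuitable mini-vertex pairs — self-loop pairs plus double-edge pairs — is at most S·d_max²/2.) -/
/-- Sum over darts of an edge-function equals twice the sum over edges. -/
lemma dart_sum_eq {V : Type*} [Fintype V] [DecidableEq V]
    (G : SimpleGraph V) [DecidableRel G.Adj] (f : Sym2 V → ℕ) :
    ∑ d : G.Dart, f d.edge = 2 * ∑ e ∈ G.edgeFinset, f e := by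
  rw [← Finset.sum_fiberwise_of_maps_to
      (g := SimpleGraph.Dart.edge) (t := G.edgeFinset)
      (fun d _ => by rw [SimpleGraph.mem_edgeFinset]; exact d.edge_mem)]
  rw [Finset.mul_sum]
  refine Finset.sum_congr rfl fun e he => ?_
  have hcard : ({d : G.Dart | d.edge = e} : Finset _).card = 2 :=
    G.dart_edge_fiber_card e (SimpleGraph.mem_edgeFinset.mp he)
  calc ∑ d ∈ ({d : G.Dart | d.edge = e} : Finset _), f d.edge
      = ∑ d ∈ ({d : G.Dart | d.edge = e} : Finset _), f e := by
        refine Finset.sum_congr rfl fun d hd => ?_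
        rw [Finset.mem_filter] at hd
        rw [hd.2]
    _ = 2 * f e := by rw [Finset.sum_const, hcard]; ring

/-- For a finite simple graph `H` with residual degrees `dhat` satisfying
`dhat v + deg_H v ≤ dmax`, the number of unsuitable mini-vertex pairs
(self-loop pairs plus double-edge pairs) is at most `S * dmax^2 / 2`,
where `S = ∑ v, dhat v`. -/
theorem stmt0 {V : Type*} [Fintype V] [DecidableEq V]
    (H : SimpleGraph V) [DecidableRel H.Adj]
    (dhat : V → ℕ) (dmax : ℕ) (hdmax : 0 < dmax)
    (hbound : ∀ v, dhat v + H.degree v ≤ dmax) :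
    (∑ v, ((dhat v).choose 2 : ℝ)) +
      ∑ e ∈ H.edgeFinset,
        Sym2.lift ⟨fun u v => (dhat u : ℝ) * (dhat v : ℝ), by intros; ring⟩ e
      ≤ (∑ v, (dhat v : ℝ)) * (dmax : ℝ) ^ 2 / 2 := by
  set fN : Sym2 V → ℕ := Sym2.lift ⟨fun u v => dhat u * dhat v, by intros; ring⟩ with hfN
  -- dart sum computation
  have hdartsum : ∑ d : H.Dart, fN d.edge = 2 * ∑ e ∈ H.edgeFinset, fN e :=
    dart_sum_eq H fN
  -- split dart sum over fst-fibers
  have hfiber : ∑ d : H.Dart, fN d.edge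
      = ∑ v, ∑ d ∈ ({d : H.Dart | d.fst = v} : Finset _), fN d.edge := by
    rw [Finset.sum_fiberwise_of_maps_to (fun d _ => Finset.mem_univ _)]
  -- per-vertex bound on fiber
  have hfib_le : ∀ v : V, ∑ d ∈ ({d : H.Dart | d.fst = v} : Finset _), fN d.edge
      ≤ H.degree v * (dhat v * dmax) := by
    intro v
    have hcard : ({d : H.Dart | d.fst = v} : Finset _).card = H.degree v :=
      H.dart_fst_fiber_card_eq_degree v
    calc ∑ d ∈ ({d : H.Dart | d.fst = v} : Finset _), fN d.edge
        ≤ ∑ _d ∈ ({d : H.Dart | d.fst = v} : Finset _), dhat v * dmax := by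
          refine Finset.sum_le_sum fun d hd => ?_
          rw [Finset.mem_filter] at hd
          have : fN d.edge = dhat d.fst * dhat d.snd := by
            rw [hfN]
            cases d with
            | mk p h => cases p with | mk a b => simp [SimpleGraph.Dart.edge]
          rw [this, hd.2]
          have hle : dhat d.snd ≤ dmax := le_trans (Nat.le_add_right _ _) (hbound d.snd)
          exact Nat.mul_le_mul_left _ hle
      _ = H.degree v * (dhat v * dmax) := by
          rw [Finset.sum_const, hcard, smul_eq_mul]
  -- per-vertex key inequality
  have hkey : ∀ v : V, 2 * (dhat v).choose 2 + H.degree v * (dhat v * dmax)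
      ≤ dhat v * dmax ^ 2 := by
    intro v
    have hb := hbound v
    have hch : 2 * (dhat v).choose 2 ≤ dhat v * (dhat v - 1) := by
      rw [Nat.choose_two_right, mul_comm]
      exact Nat.div_mul_le_self _ _
    refine le_trans (Nat.add_le_add_right hch _) ?_
    rcases Nat.eq_zero_or_pos (dhat v) with h0 | hpos
    · simp [h0]
    · obtain ⟨a, ha⟩ : ∃ a, dhat v = a + 1 :=
        ⟨dhat v - 1, (Nat.succ_pred_eq_of_pos hpos).symm⟩
      rw [ha] at hb ⊢
      simp only [Nat.add_sub_cancel]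
      have h1 : a + H.degree v + 1 ≤ dmax := by omega
      have haux : a + H.degree v * dmax ≤ dmax ^ 2 := by
        nlinarith [Nat.mul_le_mul_right dmax h1, hdmax]
      nlinarith [haux]
  -- combine in ℕ
  have hnat : 2 * (∑ v, (dhat v).choose 2) + 2 * ∑ e ∈ H.edgeFinset, fN e
      ≤ (∑ v, dhat v) * dmax ^ 2 := by
    rw [← hdartsum, hfiber, Finset.mul_sum, Finset.sum_mul, ← Finset.sum_add_distrib]
    exact Finset.sum_le_sum fun v _ => (Nat.add_le_add_left (hfib_le v) _).trans (hkey v)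
  -- cast to ℝ
  have hcast : ∑ e ∈ H.edgeFinset,
      Sym2.lift ⟨fun u v => (dhat u : ℝ) * (dhat v : ℝ), by intros; ring⟩ e
      = ((∑ e ∈ H.edgeFinset, fN e : ℕ) : ℝ) := by
    push_cast
    refine Finset.sum_congr rfl fun e _ => ?_
    induction e with
    | _ a b => simp [hfN]
  rw [hcast, le_div_iff₀ (by norm_num : (0:ℝ) < 2)]
  have := hnat
  have hcast2 : ((2 * (∑ v, (dhat v).choose 2) + 2 * ∑ e ∈ H.edgeFinset, fN e : ℕ) : ℝ)
      ≤ (((∑ v, dhat v) * dmax ^ 2 : ℕ) : ℝ) := Nat.cast_le.mpr hnat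
  push_cast at hcast2 ⊢
  linarith
end

section
/- E[ Σ_{e={i,j}∈E(G)} 1_{e∉D}·d̂(i)·d̂(j)·d(i)·d(j) ] = p·q²·Σ_{{i,j}∈E(G)} d(i)·d(j)·(d(i)−1)·(d(j)−1), where the expectation is over the random deletion set D and 1_{e∉D} is the indicator that edge e is kept. -/
open Finset

private lemma indic_prod_ne {α : Type*} [DecidableEq α] (D : Finset α) (a : α) :
    (∏ x ∈ D, (if x = a then (0:ℝ) else 1)) = if a ∈ D then 0 else 1 := by
  by_cases h : a ∈ D
  · rw [if_pos h]; exact Finset.prod_eq_zero h (by simp)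
  · rw [if_neg h]
    refine Finset.prod_eq_one fun x hx => if_neg fun heq => h ?_
    rwa [heq] at hx

private lemma bern_key {α : Type*} [DecidableEq α] (S : Finset α) (p q : ℝ) (hpq : p + q = 1)
    {a b c : α} (ha : a ∈ S) (hb : b ∈ S) (hc : c ∈ S)
    (hab : a ≠ b) (hac : a ≠ c) (hbc : b ≠ c) :
    ∑ D ∈ S.powerset, q ^ D.card * p ^ (S.card - D.card) *
      ((if a ∈ D then (0:ℝ) else 1) *
        ((if b ∈ D then (1:ℝ) else 0) * (if c ∈ D then (1:ℝ) else 0)))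
      = p * q ^ 2 := by
  have key : ∀ D ∈ S.powerset,
      q ^ D.card * p ^ (S.card - D.card) *
      ((if a ∈ D then (0:ℝ) else 1) *
        ((if b ∈ D then (1:ℝ) else 0) * (if c ∈ D then (1:ℝ) else 0)))
      = (∏ x ∈ D, (q * if x = a then (0:ℝ) else 1)) *
        ∏ x ∈ S \ D, (p * (if x = b then (0:ℝ) else 1) * (if x = c then (0:ℝ) else 1)) := by
    intro D hD
    rw [Finset.mem_powerset] at hD
    rw [Finset.prod_mul_distrib, Finset.prod_mul_distrib, Finset.prod_mul_distrib,
      Finset.prod_const, Finset.prod_const, indic_prod_ne, indic_prod_ne, indic_prod_ne,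
      Finset.card_sdiff_of_subset hD]
    have hb' : (if b ∈ S \ D then (0:ℝ) else 1) = if b ∈ D then 1 else 0 := by
      by_cases h : b ∈ D <;> simp [Finset.mem_sdiff, h, hb]
    have hc' : (if c ∈ S \ D then (0:ℝ) else 1) = if c ∈ D then 1 else 0 := by
      by_cases h : c ∈ D <;> simp [Finset.mem_sdiff, h, hc]
    rw [hb', hc']; ring
  rw [Finset.sum_congr rfl key, ← Finset.prod_add]
  have habc : ({a, b, c} : Finset α) ⊆ S := by
    intro x hx; simp only [Finset.mem_insert, Finset.mem_singleton] at hx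
    rcases hx with rfl | rfl | rfl <;> assumption
  rw [← Finset.prod_subset habc (fun x _ hx => by
    simp only [Finset.mem_insert, Finset.mem_singleton, not_or] at hx
    obtain ⟨h1, h2, h3⟩ := hx
    simp only [if_neg h1, if_neg h2, if_neg h3, mul_one]
    linarith)]
  rw [Finset.prod_insert (by simp [hab, hac]), Finset.prod_insert (by simp [hbc]),
    Finset.prod_singleton]
  simp only [eq_self_iff_true, if_true, if_neg hab, if_neg hac, if_neg hbc,
    if_neg (Ne.symm hab), if_neg (Ne.symm hac), if_neg (Ne.symm hbc)]
  ring

private lemma card_filter_as_sum {α : Type*} [DecidableEq α] {S D : Finset α} (hD : D ⊆ S)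
    (P : α → Prop) [DecidablePred P] :
    (((D.filter P).card : ℝ)) = ∑ x ∈ S, (if P x then (1:ℝ) else 0) * (if x ∈ D then 1 else 0) := by
  rw [Finset.card_filter]
  push_cast
  rw [Finset.sum_congr rfl (fun x (hx : x ∈ D) => by
    simp only [hx, if_true, mul_one] : ∀ x ∈ D, ((if P x then (1:ℝ) else 0)) =
      (if P x then (1:ℝ) else 0) * (if x ∈ D then 1 else 0))]
  exact Finset.sum_subset hD (fun x _ hx => by simp [hx])

private lemma count_lemma {V : Type*} [Fintype V] [DecidableEq V]
    (G : SimpleGraph V) [DecidableRel G.Adj] {v i j : V} (hadj : G.Adj i j)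
    (hv : v ∈ (s(i, j) : Sym2 V)) :
    ∑ e' ∈ G.edgeFinset, (if v ∈ e' then (1:ℝ) else 0) * (if e' = s(i, j) then 0 else 1)
      = (G.degree v : ℝ) - 1 := by
  have h1 : ∀ e' ∈ G.edgeFinset, (if v ∈ e' then (1:ℝ) else 0) * (if e' = s(i, j) then 0 else 1)
      = if (v ∈ e' ∧ ¬ e' = s(i, j)) then 1 else 0 := fun e' _ => by
    by_cases h : v ∈ e' <;> by_cases h2 : e' = s(i, j) <;> simp [h, h2]
  rw [Finset.sum_congr rfl h1, Finset.sum_boole]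
  have h2 : G.edgeFinset.filter (fun e' => v ∈ e' ∧ ¬ e' = s(i, j))
      = (G.edgeFinset.filter (fun e' => v ∈ e')).erase s(i, j) := by
    ext x
    simp only [Finset.mem_erase, Finset.mem_filter]
    tauto
  have hm : s(i, j) ∈ G.edgeFinset.filter (fun e' => v ∈ e') :=
    Finset.mem_filter.2 ⟨SimpleGraph.mem_edgeFinset.2 (G.mem_edgeSet.2 hadj), hv⟩
  have hdeg : 1 ≤ G.degree v := by
    rw [Nat.one_le_iff_ne_zero, ← Nat.pos_iff_ne_zero, G.degree_pos_iff_exists_adj]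
    rcases Sym2.mem_iff.1 hv with rfl | rfl
    · exact ⟨j, hadj⟩
    · exact ⟨i, hadj.symm⟩
  rw [h2, Finset.card_erase_of_mem hm, ← SimpleGraph.incidenceFinset_eq_filter,
    SimpleGraph.card_incidenceFinset_eq_degree, Nat.cast_sub hdeg, Nat.cast_one]

/-- Each edge of `G` is deleted independently with probability `q` (kept with
probability `p`), giving the random deletion set `D ⊆ E(G)`; `d̂(v)` counts
deleted edges incident to `v`.  Then
`E[ ∑_{e={i,j}∈E(G)} 1_{e∉D}·d̂(i)·d̂(j)·d(i)·d(j) ]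
  = p·q²·∑_{{i,j}∈E(G)} d(i)·d(j)·(d(i)−1)·(d(j)−1)`. -/
theorem stmt5 {V : Type*} [Fintype V] [DecidableEq V]
    (G : SimpleGraph V) [DecidableRel G.Adj]
    (p q : ℝ) (hp : 0 ≤ p) (hq : 0 ≤ q) (hpq : p + q = 1) :
    ∑ D ∈ G.edgeFinset.powerset,
        q ^ D.card * p ^ (G.edgeFinset.card - D.card) *
          ∑ e ∈ G.edgeFinset,
            (if e ∈ D then (0 : ℝ) else 1) *
              Sym2.lift ⟨fun i j =>
                ((D.filter (fun e' => i ∈ e')).card : ℝ) *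
                  ((D.filter (fun e' => j ∈ e')).card : ℝ) *
                  ((G.degree i : ℝ) * (G.degree j : ℝ)), by intros; ring⟩ e
      = p * q ^ 2 *
          ∑ e ∈ G.edgeFinset,
            Sym2.lift ⟨fun i j =>
              (G.degree i : ℝ) * (G.degree j : ℝ) *
                (((G.degree i : ℝ) - 1) * ((G.degree j : ℝ) - 1)),
              by intros; ring⟩ e := by
  classical
  simp_rw [Finset.mul_sum]
  rw [Finset.sum_comm]
  refine Finset.sum_congr rfl ?_
  intro e he
  induction e using Sym2.ind with
  | _ i j =>
    have hadj : G.Adj i j := by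
      rwa [SimpleGraph.mem_edgeFinset, SimpleGraph.mem_edgeSet] at he
    have hne : i ≠ j := hadj.ne
    simp only [Sym2.lift_mk]
    set S := G.edgeFinset with hS
    set c : ℝ := (G.degree i : ℝ) * (G.degree j : ℝ) with hc
    have step1 : ∀ D ∈ S.powerset,
        q ^ D.card * p ^ (S.card - D.card) * ((if s(i, j) ∈ D then (0:ℝ) else 1) *
          (((D.filter (fun e' => i ∈ e')).card : ℝ) * ((D.filter (fun e' => j ∈ e')).card : ℝ) *
            c))
        = ∑ e' ∈ S, ∑ e'' ∈ S,
            c * (((if i ∈ e' then (1:ℝ) else 0) * (if j ∈ e'' then (1:ℝ) else 0)) *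
            (q ^ D.card * p ^ (S.card - D.card) *
              ((if s(i, j) ∈ D then (0:ℝ) else 1) *
                ((if e' ∈ D then (1:ℝ) else 0) * (if e'' ∈ D then (1:ℝ) else 0))))) := by
      intro D hD
      rw [Finset.mem_powerset] at hD
      rw [card_filter_as_sum hD (fun e' => i ∈ e'), card_filter_as_sum hD (fun e' => j ∈ e'),
        Finset.sum_mul_sum]
      simp only [Finset.sum_mul, Finset.mul_sum]
      refine Finset.sum_congr rfl fun e' _ => Finset.sum_congr rfl fun e'' _ => by ring
    rw [Finset.sum_congr rfl step1]
    rw [Finset.sum_comm]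
    have swap2 : ∀ e' ∈ S, ∑ D ∈ S.powerset, ∑ e'' ∈ S,
        c * (((if i ∈ e' then (1:ℝ) else 0) * (if j ∈ e'' then (1:ℝ) else 0)) *
        (q ^ D.card * p ^ (S.card - D.card) *
          ((if s(i, j) ∈ D then (0:ℝ) else 1) *
            ((if e' ∈ D then (1:ℝ) else 0) * (if e'' ∈ D then (1:ℝ) else 0)))))
        = ∑ e'' ∈ S, ∑ D ∈ S.powerset,
        c * (((if i ∈ e' then (1:ℝ) else 0) * (if j ∈ e'' then (1:ℝ) else 0)) *
        (q ^ D.card * p ^ (S.card - D.card) *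
          ((if s(i, j) ∈ D then (0:ℝ) else 1) *
            ((if e' ∈ D then (1:ℝ) else 0) * (if e'' ∈ D then (1:ℝ) else 0))))) :=
      fun _ _ => Finset.sum_comm
    rw [Finset.sum_congr rfl swap2]
    have inner : ∀ e' ∈ S, ∀ e'' ∈ S,
        ∑ D ∈ S.powerset,
        c * (((if i ∈ e' then (1:ℝ) else 0) * (if j ∈ e'' then (1:ℝ) else 0)) *
        (q ^ D.card * p ^ (S.card - D.card) *
          ((if s(i, j) ∈ D then (0:ℝ) else 1) *
            ((if e' ∈ D then (1:ℝ) else 0) * (if e'' ∈ D then (1:ℝ) else 0)))))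
        = c * (p * q ^ 2 *
            (((if i ∈ e' then (1:ℝ) else 0) * (if e' = s(i, j) then 0 else 1)) *
             ((if j ∈ e'' then (1:ℝ) else 0) * (if e'' = s(i, j) then 0 else 1)))) := by
      intro e' he' e'' he''
      rw [← Finset.mul_sum, ← Finset.mul_sum]
      by_cases hi : i ∈ e'
      · by_cases hj : j ∈ e''
        · by_cases h1 : e' = s(i, j)
          · subst h1
            rw [Finset.sum_eq_zero (fun D _ => by
              by_cases hD : s(i, j) ∈ D <;> simp [hD])]
            simp
          · by_cases h2 : e'' = s(i, j)
            · subst h2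
              rw [Finset.sum_eq_zero (fun D _ => by
                by_cases hD : s(i, j) ∈ D <;> simp [hD])]
              simp
            · have h3 : e' ≠ e'' := by
                rintro rfl
                exact h1 ((Sym2.mem_and_mem_iff hne).1 ⟨hi, hj⟩)
              rw [bern_key S p q hpq he he' he'' (Ne.symm h1) (Ne.symm h2) h3]
              simp only [if_pos hi, if_pos hj, if_neg h1, if_neg h2]
              ring
        · simp [hj]
      · simp [hi]
    rw [Finset.sum_congr rfl (fun e' he' => Finset.sum_congr rfl (inner e' he'))]
    have final : ∑ e' ∈ S, ∑ e'' ∈ S,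
        c * (p * q ^ 2 *
            (((if i ∈ e' then (1:ℝ) else 0) * (if e' = s(i, j) then 0 else 1)) *
             ((if j ∈ e'' then (1:ℝ) else 0) * (if e'' = s(i, j) then 0 else 1))))
        = c * (p * q ^ 2 *
            ((∑ e' ∈ S, (if i ∈ e' then (1:ℝ) else 0) * (if e' = s(i, j) then 0 else 1)) *
             (∑ e'' ∈ S, (if j ∈ e'' then (1:ℝ) else 0) * (if e'' = s(i, j) then 0 else 1)))) := by
      rw [Finset.sum_mul_sum]
      simp only [Finset.mul_sum]
    rw [final, count_lemma G hadj (Sym2.mem_mk_left i j), count_lemma G hadj (Sym2.mem_mk_right i j)]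
    ring
end

section
/- For every integer r with 0 ≤ r < m, one has ψ_r(G) ≤ d_max²·(2m−2r)²/m. -/
set_option maxHeartbeats 1000000 in
theorem stmt6_aux (M D R S1 S2 S3 S4 S5 : ℝ) (hM : 1 ≤ M) (hD : 1 ≤ D)
    (hR0 : 0 ≤ R) (hRM : R + 1 ≤ M)
    (h1 : S1 ≤ M * D) (h2 : S2 ≤ M * D ^ 2) (h30 : 0 ≤ S3) (h3 : S3 ≤ 2 * M * D)
    (h4 : 0 ≤ S4) (h5 : S5 ≤ 2 * M * D ^ 2) :
    (2 * M - 2 * R) ^ 2 *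
        (S1 / (4 * M ^ 2) + R * S2 / (4 * M ^ 3) + S3 ^ 2 / (32 * M ^ 3)
          - R * S4 / (16 * M ^ 4)) +
      (2 * M - 2 * R) * S5 / (16 * M ^ 2) ≤ D ^ 2 * (2 * M - 2 * R) ^ 2 / M := by
  set s : ℝ := 2 * M - 2 * R with hs
  have hM0 : (0 : ℝ) < M := by linarith
  have hD0 : (0 : ℝ) < D := by linarith
  have hs2 : (2 : ℝ) ≤ s := by rw [hs]; linarith
  have hs0 : (0 : ℝ) ≤ s := by linarith
  have hRM' : R ≤ M := by linarith
  rw [← sub_nonneg]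
  have key : D ^ 2 * s ^ 2 / M -
      (s ^ 2 * (S1 / (4 * M ^ 2) + R * S2 / (4 * M ^ 3) + S3 ^ 2 / (32 * M ^ 3)
          - R * S4 / (16 * M ^ 4)) + s * S5 / (16 * M ^ 2)) =
      (32 * M ^ 3 * D ^ 2 * s ^ 2 - 8 * M ^ 2 * s ^ 2 * S1 - 8 * M * R * s ^ 2 * S2
        - M * s ^ 2 * S3 ^ 2 + 2 * R * s ^ 2 * S4 - 2 * M ^ 2 * s * S5) / (32 * M ^ 4) := by
    field_simp
    ring
  rw [key]
  apply div_nonneg _ (by positivity)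
  have h1' : S1 ≤ M * D ^ 2 := by nlinarith
  have t1 : M ^ 2 * s ^ 2 * S1 ≤ M ^ 2 * s ^ 2 * (M * D ^ 2) :=
    mul_le_mul_of_nonneg_left h1' (by positivity)
  have nn2 : (0 : ℝ) ≤ M * s ^ 2 * R := mul_nonneg (mul_nonneg hM0.le (sq_nonneg s)) hR0
  have t2 : M * s ^ 2 * R * S2 ≤ M * s ^ 2 * R * (M * D ^ 2) :=
    mul_le_mul_of_nonneg_left h2 nn2
  have t2b : M ^ 2 * R * D ^ 2 * s ^ 2 ≤ M ^ 3 * D ^ 2 * s ^ 2 := by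
    have h := mul_le_mul_of_nonneg_left hRM' (show (0:ℝ) ≤ M ^ 2 * D ^ 2 * s ^ 2 by positivity)
    nlinarith [h]
  have t3 : S3 ^ 2 ≤ (2 * M * D) ^ 2 := by nlinarith
  have t3' : M * s ^ 2 * S3 ^ 2 ≤ M * s ^ 2 * (2 * M * D) ^ 2 :=
    mul_le_mul_of_nonneg_left t3 (by positivity)
  have t4 : (0 : ℝ) ≤ R * s ^ 2 * S4 := mul_nonneg (mul_nonneg hR0 (sq_nonneg s)) h4
  have t5 : M ^ 2 * s * S5 ≤ M ^ 2 * s * (2 * M * D ^ 2) :=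
    mul_le_mul_of_nonneg_left h5 (by positivity)
  have hss : 2 * s ≤ s ^ 2 := by nlinarith
  have t5b : M ^ 2 * s * (2 * M * D ^ 2) ≤ M ^ 3 * D ^ 2 * s ^ 2 := by
    have h := mul_le_mul_of_nonneg_left hss (show (0:ℝ) ≤ M ^ 3 * D ^ 2 by positivity)
    nlinarith [h]
  have hfinal : (0 : ℝ) ≤ M ^ 3 * D ^ 2 * s ^ 2 := by positivity
  linarith [t1, t2, t2b, t3', t4, t5, t5b, hfinal]

/-- For a graph `G` with `m ≥ 1` edges, maximum degree at most `dmax ≥ 1`, and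
`0 ≤ r < m`, the expected weighted number of unsuitable pairs
`ψ_r(G)` satisfies `ψ_r(G) ≤ dmax²·(2m−2r)²/m`. -/
theorem stmt6 {V : Type*} [Fintype V] [DecidableEq V]
    (G : SimpleGraph V) [DecidableRel G.Adj]
    (m : ℕ) (hm : G.edgeFinset.card = m) (hm1 : 1 ≤ m)
    (dmax : ℕ) (hdmax : 1 ≤ dmax) (hdeg : ∀ v, G.degree v ≤ dmax)
    (r : ℕ) (hr : r < m) :
    ((2 * m : ℝ) - 2 * r) ^ 2 *
        ((∑ v, ((G.degree v).choose 2 : ℝ)) / (4 * (m : ℝ) ^ 2) +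
          (r : ℝ) *
            (∑ e ∈ G.edgeFinset,
              Sym2.lift ⟨fun i j => ((G.degree i : ℝ) - 1) * ((G.degree j : ℝ) - 1),
                by intros; ring⟩ e) / (4 * (m : ℝ) ^ 3) +
          (∑ v, (G.degree v : ℝ) ^ 2) ^ 2 / (32 * (m : ℝ) ^ 3) -
          (r : ℝ) *
            (∑ e ∈ G.edgeFinset,
              Sym2.lift ⟨fun i j =>
                (G.degree i : ℝ) * (G.degree j : ℝ) *
                  (((G.degree i : ℝ) - 1) * ((G.degree j : ℝ) - 1)),
                by intros; ring⟩ e) / (16 * (m : ℝ) ^ 4)) +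
      ((2 * m : ℝ) - 2 * r) * (∑ v, (G.degree v : ℝ) ^ 3) / (16 * (m : ℝ) ^ 2)
      ≤ (dmax : ℝ) ^ 2 * ((2 * m : ℝ) - 2 * r) ^ 2 / m := by
  have hM : (1 : ℝ) ≤ m := by exact_mod_cast hm1
  have hD : (1 : ℝ) ≤ dmax := by exact_mod_cast hdmax
  have hdeg' : ∀ v, (G.degree v : ℝ) ≤ dmax := fun v => by exact_mod_cast hdeg v
  have hdegsum : ∑ v, (G.degree v : ℝ) = 2 * m := by
    have h := G.sum_degrees_eq_twice_card_edges
    rw [hm] at h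
    exact_mod_cast congrArg (Nat.cast : ℕ → ℝ) h
  -- vertex-sum bounds
  have h1 : (∑ v, ((G.degree v).choose 2 : ℝ)) ≤ (m : ℝ) * dmax := by
    calc (∑ v, ((G.degree v).choose 2 : ℝ))
        ≤ ∑ v, (G.degree v : ℝ) * dmax / 2 := by
          refine Finset.sum_le_sum fun v _ => ?_
          rw [Nat.cast_choose_two]
          have h0 : (0:ℝ) ≤ G.degree v := Nat.cast_nonneg _
          have := hdeg' v
          nlinarith
      _ = (∑ v, (G.degree v : ℝ)) * dmax / 2 := by
          rw [← Finset.sum_div, ← Finset.sum_mul]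
      _ = (m : ℝ) * dmax := by rw [hdegsum]; ring
  have h3 : (∑ v, (G.degree v : ℝ) ^ 2) ≤ 2 * m * dmax := by
    calc (∑ v, (G.degree v : ℝ) ^ 2)
        ≤ ∑ v, (G.degree v : ℝ) * dmax := by
          refine Finset.sum_le_sum fun v _ => ?_
          have h0 : (0:ℝ) ≤ G.degree v := Nat.cast_nonneg _
          have := hdeg' v
          nlinarith
      _ = (∑ v, (G.degree v : ℝ)) * dmax := by rw [← Finset.sum_mul]
      _ = 2 * m * dmax := by rw [hdegsum]
  have h30 : (0:ℝ) ≤ ∑ v, (G.degree v : ℝ) ^ 2 :=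
    Finset.sum_nonneg fun v _ => by positivity
  have h5 : (∑ v, (G.degree v : ℝ) ^ 3) ≤ 2 * m * (dmax:ℝ) ^ 2 := by
    calc (∑ v, (G.degree v : ℝ) ^ 3)
        ≤ ∑ v, (G.degree v : ℝ) * (dmax:ℝ) ^ 2 := by
          refine Finset.sum_le_sum fun v _ => ?_
          have h0 : (0:ℝ) ≤ G.degree v := Nat.cast_nonneg _
          have hsq : (G.degree v : ℝ) ^ 2 ≤ (dmax:ℝ) ^ 2 := pow_le_pow_left₀ h0 (hdeg' v) 2
          calc (G.degree v : ℝ) ^ 3 = (G.degree v : ℝ) * (G.degree v : ℝ) ^ 2 := by ring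
            _ ≤ (G.degree v : ℝ) * (dmax:ℝ) ^ 2 := mul_le_mul_of_nonneg_left hsq h0
      _ = (∑ v, (G.degree v : ℝ)) * (dmax:ℝ) ^ 2 := by rw [← Finset.sum_mul]
      _ = 2 * m * (dmax:ℝ) ^ 2 := by rw [hdegsum]
  -- edge-sum bounds
  have hone : ∀ {i j : V}, G.Adj i j → (1:ℝ) ≤ G.degree i := by
    intro i j hij
    have : 0 < G.degree i := (G.degree_pos_iff_exists_adj i).2 ⟨j, hij⟩
    exact_mod_cast this
  have h2 : (∑ e ∈ G.edgeFinset,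
      Sym2.lift ⟨fun i j => ((G.degree i : ℝ) - 1) * ((G.degree j : ℝ) - 1),
        by intros; ring⟩ e) ≤ (m : ℝ) * (dmax:ℝ) ^ 2 := by
    have hb : ∀ e ∈ G.edgeFinset,
        Sym2.lift ⟨fun i j => ((G.degree i : ℝ) - 1) * ((G.degree j : ℝ) - 1),
          by intros; ring⟩ e ≤ (dmax:ℝ) ^ 2 := by
      intro e he
      induction e using Sym2.ind with
      | _ i j =>
        rw [SimpleGraph.mem_edgeFinset, SimpleGraph.mem_edgeSet] at he
        have hi := hone he
        have hj := hone he.symm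
        have hi' := hdeg' i
        have hj' := hdeg' j
        simp only [Sym2.lift_mk]
        nlinarith
    calc (∑ e ∈ G.edgeFinset, _) ≤ G.edgeFinset.card • ((dmax:ℝ) ^ 2) :=
        Finset.sum_le_card_nsmul _ _ _ hb
      _ = (m : ℝ) * (dmax:ℝ) ^ 2 := by rw [hm, nsmul_eq_mul]
  have h4 : (0:ℝ) ≤ ∑ e ∈ G.edgeFinset,
      Sym2.lift ⟨fun i j =>
        (G.degree i : ℝ) * (G.degree j : ℝ) *
          (((G.degree i : ℝ) - 1) * ((G.degree j : ℝ) - 1)),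
        by intros; ring⟩ e := by
    refine Finset.sum_nonneg fun e he => ?_
    induction e using Sym2.ind with
    | _ i j =>
      rw [SimpleGraph.mem_edgeFinset, SimpleGraph.mem_edgeSet] at he
      have hi := hone he
      have hj := hone he.symm
      simp only [Sym2.lift_mk]
      exact mul_nonneg (mul_nonneg (Nat.cast_nonneg _) (Nat.cast_nonneg _))
        (mul_nonneg (by linarith) (by linarith))
  have := stmt6_aux (m : ℝ) (dmax : ℝ) (r : ℝ) _ _ _ _ _ hM hD (Nat.cast_nonneg r)
    (by exact_mod_cast Nat.succ_le_of_lt hr) h1 h2 h30 h3 h4 h5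
  convert this using 2 <;> ring
end

section
/- Suppose that every pair of distinct vertices u ≠ v with d̂(u) > 0 and d̂(v) > 0 is adjacent in H (this is exactly the condition under which the sequential algorithm fails with S residual mini-vertices remaining). Then the number of vertices v with d̂(v) > 0 is at most d_max, and S ≤ d_max² + 1. -/
/-- If every pair of distinct vertices with positive residual degree is
adjacent in `H` (the failure condition of the sequential algorithm), then the
number of vertices with positive residual degree is at most `dmax`, and the
number `S` of remaining mini-vertices satisfies `S ≤ dmax² + 1`. -/
theorem stmt7 {V : Type*} [Fintype V] [DecidableEq V]
    (H : SimpleGraph V) [DecidableRel H.Adj]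
    (dhat : V → ℕ) (dmax : ℕ) (hdmax : 0 < dmax)
    (hbound : ∀ v, dhat v + H.degree v ≤ dmax)
    (hfail : ∀ u v, u ≠ v → 0 < dhat u → 0 < dhat v → H.Adj u v) :
    (Finset.univ.filter fun v => 0 < dhat v).card ≤ dmax ∧
      ∑ v, dhat v ≤ dmax ^ 2 + 1 := by
  classical
  set P := Finset.univ.filter fun v => 0 < dhat v with hP
  have hmem : ∀ v, v ∈ P ↔ 0 < dhat v := by
    intro v; simp [hP]
  have hdeg : ∀ v ∈ P, P.card - 1 ≤ H.degree v := by
    intro v hv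
    have hsub : P.erase v ⊆ H.neighborFinset v := by
      intro u hu
      rw [Finset.mem_erase] at hu
      rw [SimpleGraph.mem_neighborFinset]
      exact hfail v u (Ne.symm hu.1) ((hmem v).1 hv) ((hmem u).1 hu.2)
    calc P.card - 1 = (P.erase v).card := (Finset.card_erase_of_mem hv).symm
      _ ≤ (H.neighborFinset v).card := Finset.card_le_card hsub
      _ = H.degree v := H.card_neighborFinset_eq_degree v
  have hcard : P.card ≤ dmax := by
    rcases P.eq_empty_or_nonempty with h | ⟨v, hv⟩
    · simp [h]
    · have h1 : 0 < dhat v := (hmem v).1 hv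
      have h2 := hbound v
      have h3 := hdeg v hv
      have h4 : 0 < P.card := Finset.card_pos.2 ⟨v, hv⟩
      omega
  refine ⟨hcard, ?_⟩
  have hsum : ∑ v, dhat v = ∑ v ∈ P, dhat v := by
    rw [hP]
    rw [Finset.sum_filter_of_ne]
    intro v _ h
    omega
  have heach : ∀ v ∈ P, dhat v ≤ dmax - (P.card - 1) := by
    intro v hv
    have := hbound v
    have := hdeg v hv
    omega
  rcases P.eq_empty_or_nonempty with h | ⟨v, hv⟩
  · rw [hsum, h]; simp
  · have h4 : 0 < P.card := Finset.card_pos.2 ⟨v, hv⟩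
    calc ∑ v, dhat v = ∑ v ∈ P, dhat v := hsum
      _ ≤ ∑ _v ∈ P, (dmax - (P.card - 1)) := Finset.sum_le_sum heach
      _ = P.card * (dmax - (P.card - 1)) := by rw [Finset.sum_const, smul_eq_mul]
      _ ≤ dmax * dmax := by
          apply Nat.mul_le_mul hcard
          omega
      _ ≤ dmax ^ 2 + 1 := by rw [pow_two]; omega
end

section
/- For all integers m ≥ 1 and 0 ≤ r ≤ m, C(m,r)·(r/m)^r·((m−r)/m)^{m−r} ≥ 1/√(2m), with the convention 0⁰ = 1. (Equivalently: a Binomial(m, r/m) random variable takes the value r with probability at least 1/√(2m).) -/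
open Real Stirling Filter

lemma sqrtpi_le_stirlingSeq (n : ℕ) : √π ≤ stirlingSeq (n+1) := by
  have h := tendsto_stirlingSeq_sqrt_pi.comp (tendsto_add_atTop_nat 1)
  exact stirlingSeq'_antitone.le_of_tendsto h n

lemma sqrtpi_le_stirlingSeq' (n : ℕ) (hn : 1 ≤ n) : √π ≤ stirlingSeq n := by
  obtain ⟨j, rfl⟩ : ∃ j, n = j + 1 := ⟨n - 1, by omega⟩
  exact sqrtpi_le_stirlingSeq j

lemma stirlingSeq_pos' (n : ℕ) (hn : 1 ≤ n) : 0 < stirlingSeq n := by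
  obtain ⟨j, rfl⟩ : ∃ j, n = j + 1 := ⟨n - 1, by omega⟩
  exact stirlingSeq'_pos j

lemma stirlingSeq_two : stirlingSeq 2 = Real.exp 1 ^ 2 / 4 := by
  have h4 : √(2*(2:ℕ):ℝ) = 2 := by
    rw [show (2*(2:ℕ):ℝ) = 2^2 by norm_num, Real.sqrt_sq (by norm_num)]
  rw [stirlingSeq, h4]
  have := Real.exp_pos 1
  field_simp
  ring

lemma stirlingSeq_le_two (n : ℕ) (hn : 2 ≤ n) : stirlingSeq n ≤ Real.exp 1 ^ 2 / 4 := by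
  obtain ⟨k, rfl⟩ : ∃ k, n = k + 1 := ⟨n - 1, by omega⟩
  rw [← stirlingSeq_two]
  exact stirlingSeq'_antitone (show 1 ≤ k by omega)

lemma exp_le' : Real.exp 1 ≤ 2.72 :=
  le_of_lt (lt_trans Real.exp_one_lt_d9 (by norm_num))

lemma sqrtpi_ge : (1.772 : ℝ) ≤ √π := by
  rw [show (1.772:ℝ) = √(1.772^2) from (Real.sqrt_sq (by norm_num)).symm]
  exact Real.sqrt_le_sqrt (by nlinarith [Real.pi_gt_d6])

lemma key1 (k : ℕ) (hk : 2 ≤ k) :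
    stirlingSeq 1 * stirlingSeq k * √((1:ℝ) * k) ≤ stirlingSeq (1+k) * ((1:ℝ) + k) := by
  have hkpos : (0:ℝ) < k := by positivity
  have hk2 : (2:ℝ) ≤ k := by exact_mod_cast hk
  have hsk : stirlingSeq k ≤ Real.exp 1 ^ 2 / 4 := stirlingSeq_le_two k hk
  have hskpos : 0 < stirlingSeq k := stirlingSeq_pos' k (by omega)
  have hpi : √π ≤ stirlingSeq (1+k) := sqrtpi_le_stirlingSeq' _ (by omega)
  rw [stirlingSeq_one, one_mul]
  have step1 : Real.exp 1 / √2 * stirlingSeq k * √(k:ℝ)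
      ≤ Real.exp 1 / √2 * (Real.exp 1 ^ 2 / 4) * √(k:ℝ) := by
    have := Real.exp_pos 1
    have h2 : (0:ℝ) < √2 := Real.sqrt_pos.2 (by norm_num)
    apply mul_le_mul_of_nonneg_right _ (Real.sqrt_nonneg _)
    apply mul_le_mul_of_nonneg_left hsk (by positivity)
  have step2 : Real.exp 1 / √2 * (Real.exp 1 ^ 2 / 4) * √(k:ℝ) ≤ √π * (1 + (k:ℝ)) := by
    have hL : 0 ≤ Real.exp 1 / √2 * (Real.exp 1 ^ 2 / 4) * √(k:ℝ) := by positivity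
    have hR : (0:ℝ) ≤ √π * (1 + (k:ℝ)) := by positivity
    rw [← Real.sqrt_sq hL, ← Real.sqrt_sq hR]
    apply Real.sqrt_le_sqrt
    have hsq2 : (√2:ℝ)^2 = 2 := Real.sq_sqrt (by norm_num)
    have hsqk : (√(k:ℝ))^2 = k := Real.sq_sqrt hkpos.le
    have hsqpi : (√π)^2 = π := Real.sq_sqrt Real.pi_pos.le
    have he6 : Real.exp 1 ^ 6 ≤ 405.07 := by
      calc Real.exp 1 ^ 6 ≤ 2.72^6 := pow_le_pow_left₀ (Real.exp_pos 1).le exp_le' 6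
        _ ≤ 405.07 := by norm_num
    have hpi' : (3.141592:ℝ) ≤ π := by nlinarith [Real.pi_gt_d6]
    rw [mul_pow, mul_pow, mul_pow, div_pow, div_pow, hsq2, hsqk, hsqpi]
    have expand : Real.exp 1 ^ 2 / 2 * ((Real.exp 1 ^ 2) ^ 2 / 4 ^ 2) * (k:ℝ)
        = Real.exp 1 ^ 6 / 32 * k := by ring
    rw [expand]
    nlinarith [sq_nonneg ((k:ℝ) - 2), sq_nonneg ((k:ℝ) - 1), mul_nonneg (sub_nonneg.2 hk2) (sub_nonneg.2 hk2)]
  exact le_trans step1 (le_trans step2 (mul_le_mul_of_nonneg_right hpi (by positivity)))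

lemma key (r k : ℕ) (hr : 1 ≤ r) (hk : 1 ≤ k) :
    stirlingSeq r * stirlingSeq k * √((r:ℝ) * k) ≤ stirlingSeq (r+k) * ((r:ℝ) + k) := by
  have hrpos : (0:ℝ) < r := by positivity
  have hkpos : (0:ℝ) < k := by positivity
  rcases Nat.lt_or_ge r 2 with h1 | h1
  · have hr1 : r = 1 := by omega
    subst hr1
    rcases Nat.lt_or_ge k 2 with h2 | h2
    · have hk1 : k = 1 := by omega
      subst hk1
      rw [stirlingSeq_one, stirlingSeq_two]
      have h2 : (0:ℝ) < √2 := Real.sqrt_pos.2 (by norm_num)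
      have h22 : (√2:ℝ) * √2 = 2 := Real.mul_self_sqrt (by norm_num)
      have := Real.exp_pos 1
      push_cast
      norm_num [Real.sqrt_one]
      rw [div_mul_div_comm, h22]
      have hexp2 : Real.exp 2 = Real.exp 1 * Real.exp 1 := by
        rw [← Real.exp_add]; norm_num
      nlinarith [hexp2]
    · have := key1 k h2
      push_cast
      push_cast at this
      convert this using 2
  · rcases Nat.lt_or_ge k 2 with h2 | h2
    · have hk1 : k = 1 := by omega
      subst hk1
      have h := key1 r h1
      push_cast at h ⊢
      calc stirlingSeq r * stirlingSeq 1 * √((r:ℝ) * 1)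
          = stirlingSeq 1 * stirlingSeq r * √((1:ℝ) * r) := by
            rw [mul_comm (stirlingSeq r), mul_comm ((r:ℝ)) 1]
        _ ≤ stirlingSeq (1+r) * ((1:ℝ) + r) := h
        _ = stirlingSeq (r+1) * ((r:ℝ) + 1) := by rw [add_comm 1 r, add_comm (1:ℝ)]
    · -- both ≥ 2
      have hsr : stirlingSeq r ≤ Real.exp 1 ^ 2 / 4 := stirlingSeq_le_two r h1
      have hsk : stirlingSeq k ≤ Real.exp 1 ^ 2 / 4 := stirlingSeq_le_two k h2
      have hsrpos := stirlingSeq_pos' r (by omega)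
      have hskpos := stirlingSeq_pos' k (by omega)
      have hpi : √π ≤ stirlingSeq (r+k) := sqrtpi_le_stirlingSeq' _ (by omega)
      have hsq : √((r:ℝ)*k) ≤ ((r:ℝ)+k)/2 := by
        rw [← Real.sqrt_sq (show (0:ℝ) ≤ ((r:ℝ)+k)/2 by positivity)]
        apply Real.sqrt_le_sqrt
        nlinarith [sq_nonneg ((r:ℝ)-k)]
      have he := Real.exp_pos 1
      have he4 : Real.exp 1 ^ 4 ≤ 54.8 := by
        calc Real.exp 1 ^ 4 ≤ 2.72^4 := pow_le_pow_left₀ (Real.exp_pos 1).le exp_le' 4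
          _ ≤ 54.8 := by norm_num
      calc stirlingSeq r * stirlingSeq k * √((r:ℝ)*k)
          ≤ (Real.exp 1 ^ 2 / 4) * (Real.exp 1 ^ 2 / 4) * (((r:ℝ)+k)/2) := by
            apply mul_le_mul (mul_le_mul hsr hsk hskpos.le (by positivity)) hsq
              (Real.sqrt_nonneg _) (by positivity)
        _ ≤ √π * ((r:ℝ)+k) := by
            have hc : Real.exp 1 ^ 4 / 32 ≤ √π := by nlinarith [sqrtpi_ge]
            nlinarith [mul_le_mul_of_nonneg_right hc (show (0:ℝ) ≤ (r:ℝ)+k by positivity)]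
        _ ≤ stirlingSeq (r+k) * ((r:ℝ)+k) :=
            mul_le_mul_of_nonneg_right hpi (by positivity)

/-- For all `m ≥ 1` and `0 ≤ r ≤ m`, a `Binomial(m, r/m)` random variable
takes the value `r` with probability at least `1/√(2m)`:
`C(m,r)·(r/m)^r·((m−r)/m)^{m−r} ≥ 1/√(2m)` (with the convention `0⁰ = 1`,
which holds for natural-number exponents in `ℝ`). -/
theorem stmt8 (m r : ℕ) (hm : 1 ≤ m) (hr : r ≤ m) :
    1 / Real.sqrt (2 * m) ≤
      (m.choose r : ℝ) * ((r : ℝ) / m) ^ r * (((m - r : ℕ) : ℝ) / m) ^ (m - r) := by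
  have hmpos : (0:ℝ) < m := by exact_mod_cast hm
  have hm1 : (1:ℝ) ≤ m := by exact_mod_cast hm
  have hs : (1:ℝ) ≤ √(2*m) := by
    rw [show (1:ℝ) = √1 from Real.sqrt_one.symm]
    apply Real.sqrt_le_sqrt; linarith [hm1]
  rcases Nat.eq_zero_or_pos r with h0 | hrpos
  · subst h0
    simp only [Nat.choose_zero_right, Nat.cast_one, Nat.cast_zero, pow_zero, mul_one,
      Nat.sub_zero, one_mul, div_self hmpos.ne', one_pow]
    rw [div_le_one (by positivity)]
    exact hs
  rcases eq_or_lt_of_le hr with h1 | h1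
  · subst h1
    simp only [Nat.choose_self, Nat.cast_one, Nat.sub_self, Nat.cast_zero, pow_zero, mul_one,
      one_mul, div_self hmpos.ne', one_pow]
    rw [div_le_one (by positivity)]
    exact hs
  · obtain ⟨k, hk1, rfl⟩ : ∃ k, 1 ≤ k ∧ m = r + k := ⟨m - r, by omega, by omega⟩
    simp only [Nat.add_sub_cancel_left]
    have hrpos' : (0:ℝ) < r := by exact_mod_cast hrpos
    have hkpos : (0:ℝ) < k := by exact_mod_cast hk1
    have hmr : (0:ℝ) < (r:ℝ) + k := by linarith
    have hsr := stirlingSeq_pos' r hrpos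
    have hsk := stirlingSeq_pos' k hk1
    have hsm := stirlingSeq_pos' (r+k) (by omega)
    have h2r : (0:ℝ) < √(2*r) := Real.sqrt_pos.2 (by linarith)
    have h2k : (0:ℝ) < √(2*k) := Real.sqrt_pos.2 (by linarith)
    have h2m : (0:ℝ) < √(2*((r:ℝ)+k)) := Real.sqrt_pos.2 (by linarith)
    have hch : (r+k).choose r * Nat.factorial r * Nat.factorial k = Nat.factorial (r+k) := by
      have := Nat.choose_mul_factorial_mul_factorial (Nat.le_add_right r k)
      simpa [Nat.add_sub_cancel_left] using this
    have hchR : ((r+k).choose r : ℝ) * (Nat.factorial r : ℝ) * (Nat.factorial k : ℝ) = (Nat.factorial (r+k) : ℝ) := by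
      exact_mod_cast hch
    have he := Real.exp_pos 1
    have hprod : ((r+k).choose r : ℝ) * ((r:ℝ)/((r:ℝ)+k))^r * ((k:ℝ)/((r:ℝ)+k))^k
        * √(2*((r:ℝ)+k)) * (stirlingSeq r * stirlingSeq k * (√(2*(r:ℝ)) * √(2*(k:ℝ))))
        = stirlingSeq (r+k) * (√(2*((r:ℝ)+k)) * √(2*((r:ℝ)+k))) := by
      rw [stirlingSeq, stirlingSeq, stirlingSeq]
      rw [← hchR]
      push_cast
      have hfr : (0:ℝ) < (Nat.factorial r : ℝ) := by exact_mod_cast r.factorial_pos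
      have hfk : (0:ℝ) < (Nat.factorial k : ℝ) := by exact_mod_cast k.factorial_pos
      field_simp
      rw [div_pow, div_pow, div_pow, div_pow, div_pow, pow_add, pow_add]
      field_simp
    have hmm : √(2*((r:ℝ)+k)) * √(2*((r:ℝ)+k)) = 2*((r:ℝ)+k) :=
      Real.mul_self_sqrt (by linarith)
    rw [hmm] at hprod
    push_cast
    rw [div_le_iff₀ h2m]
    have hD : 0 < stirlingSeq r * stirlingSeq k * (√(2*(r:ℝ)) * √(2*(k:ℝ))) := by
      apply mul_pos (mul_pos hsr hsk) (mul_pos h2r h2k)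
    rw [← mul_le_mul_iff_of_pos_right hD, one_mul, hprod]
    have h4 : √(2*(r:ℝ)) * √(2*(k:ℝ)) = 2 * √((r:ℝ)*k) := by
      rw [← Real.sqrt_mul (by linarith) (2*(k:ℝ)),
        show (2*(r:ℝ))*(2*(k:ℝ)) = 4*((r:ℝ)*(k:ℝ)) by ring,
        Real.sqrt_mul (by norm_num) ((r:ℝ)*(k:ℝ)),
        show (4:ℝ) = 2^2 by norm_num, Real.sqrt_sq (by norm_num)]
    rw [h4]
    nlinarith [key r k hrpos hk1]
end

section
/- Let f(m,s) = C(m,s)·(s/m)^s·((m−s)/m)^{m−s}. For all integers m and r with 1 ≤ r and 2r + 1 ≤ m, one has f(m, r+1) ≤ f(m, r); that is, the probability that a Binomial(m, s/m) variable equals s is non-increasing in s for s up to (m−1)/2. -/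
open Real in
lemma key_stmt9 (a b : ℕ) (ha : 1 ≤ a) (hab : a ≤ b) :
    (1 + 1 / (a:ℝ)) ^ a ≤ (1 + 1 / (b:ℝ)) ^ b := by
  have ha' : (0:ℝ) < a := by exact_mod_cast ha
  have hb' : (0:ℝ) < b := lt_of_lt_of_le ha' (by exact_mod_cast hab)
  have hp : (1:ℝ) ≤ (b:ℝ) / a := (one_le_div ha').2 (by exact_mod_cast hab)
  have h1 : (1 : ℝ) + 1/(a:ℝ) ≤ (1 + 1/(b:ℝ)) ^ ((b:ℝ)/a) := by
    have := one_add_mul_self_le_rpow_one_add (s := 1/(b:ℝ))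
      (le_trans (by norm_num) (by positivity : (0:ℝ) ≤ 1/b)) hp
    calc (1:ℝ) + 1/(a:ℝ) = 1 + (b:ℝ)/a * (1/b) := by field_simp
    _ ≤ _ := this
  have hbase : (0:ℝ) ≤ 1 + 1/(b:ℝ) := by positivity
  calc (1 + 1 / (a:ℝ)) ^ a ≤ ((1 + 1/(b:ℝ)) ^ ((b:ℝ)/a)) ^ a :=
        pow_le_pow_left₀ (by positivity) h1 a
    _ = (1 + 1/(b:ℝ)) ^ b := by
        rw [← rpow_natCast ((1 + 1/(b:ℝ)) ^ ((b:ℝ)/a)) a, ← rpow_mul hbase,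
          div_mul_cancel₀ _ (ne_of_gt ha'), rpow_natCast]

lemma key2_stmt9 (a b : ℕ) (ha : 1 ≤ a) (hab : a ≤ b) :
    ((a:ℝ) + 1) ^ a * (b:ℝ) ^ b ≤ (a:ℝ) ^ a * ((b:ℝ) + 1) ^ b := by
  have ha' : (0:ℝ) < a := by exact_mod_cast ha
  have hb' : (0:ℝ) < b := lt_of_lt_of_le ha' (by exact_mod_cast hab)
  have h := mul_le_mul_of_nonneg_right (key_stmt9 a b ha hab)
    (by positivity : (0:ℝ) ≤ (a:ℝ)^a * (b:ℝ)^b)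
  calc ((a:ℝ) + 1) ^ a * (b:ℝ) ^ b
      = (1 + 1 / (a:ℝ)) ^ a * ((a:ℝ)^a * (b:ℝ)^b) := by
        rw [show ((a:ℝ)+1)^a = (1+1/(a:ℝ))^a * (a:ℝ)^a from by
          rw [← mul_pow]; congr 1; field_simp]; ring
    _ ≤ (1 + 1 / (b:ℝ)) ^ b * ((a:ℝ)^a * (b:ℝ)^b) := h
    _ = (a:ℝ) ^ a * ((b:ℝ) + 1) ^ b := by
        rw [show ((b:ℝ)+1)^b = (1+1/(b:ℝ))^b * (b:ℝ)^b from by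
          rw [← mul_pow]; congr 1; field_simp]; ring

/-- With `f(m,s) = C(m,s)·(s/m)^s·((m−s)/m)^{m−s}`, for all `1 ≤ r` with
`2r + 1 ≤ m` one has `f(m, r+1) ≤ f(m, r)`. -/
theorem stmt9 (m r : ℕ) (hr : 1 ≤ r) (hm : 2 * r + 1 ≤ m) :
    (m.choose (r + 1) : ℝ) * (((r + 1 : ℕ) : ℝ) / m) ^ (r + 1) *
        (((m - (r + 1) : ℕ) : ℝ) / m) ^ (m - (r + 1))
      ≤ (m.choose r : ℝ) * ((r : ℝ) / m) ^ r * (((m - r : ℕ) : ℝ) / m) ^ (m - r) := by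
  have hm0 : (0:ℝ) < m := Nat.cast_pos.mpr (by omega)
  set b := m - (r + 1) with hbdef
  have hrb : r ≤ b := by omega
  have hb1 : m - r = b + 1 := by omega
  have e1 : (r + 1) + b = m := by omega
  have e0 : r + (m - r) = m := by omega
  have hsplit : ∀ (c x y : ℝ) (i j : ℕ), i + j = m →
      c * (x / m) ^ i * (y / m) ^ j = c * x ^ i * y ^ j * (1 / (m:ℝ)) ^ m := by
    intro c x y i j hij
    rw [div_eq_mul_one_div x, div_eq_mul_one_div y, mul_pow, mul_pow, ← hij, pow_add]
    ring
  rw [hsplit _ _ _ _ _ e1, hsplit _ _ _ _ _ e0]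
  apply mul_le_mul_of_nonneg_right _ (by positivity)
  -- numerator inequality
  have hchoose : (m.choose (r+1) : ℝ) * ((r:ℝ) + 1) = (m.choose r : ℝ) * ((b:ℝ) + 1) := by
    have := Nat.choose_succ_right_eq m r
    have h' : m.choose (r+1) * (r+1) = m.choose r * (b+1) := by rw [this, show m - r = b + 1 from by omega]
    exact_mod_cast h'
  have hA := key2_stmt9 r b hr hrb
  have hcb : ((m - (r+1) : ℕ) : ℝ) = (b:ℝ) := by rw [← hbdef]
  have hcb1 : ((m - r : ℕ) : ℝ) = (b:ℝ) + 1 := by rw [hb1]; push_cast; ring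
  rw [hcb, hcb1, hb1]
  push_cast
  calc (m.choose (r+1) : ℝ) * ((r:ℝ) + 1) ^ (r+1) * (b:ℝ) ^ b
      = ((m.choose (r+1) : ℝ) * ((r:ℝ) + 1)) * (((r:ℝ) + 1) ^ r * (b:ℝ) ^ b) := by ring
    _ ≤ ((m.choose r : ℝ) * ((b:ℝ) + 1)) * ((r:ℝ) ^ r * ((b:ℝ) + 1) ^ b) := by
        rw [hchoose]
        apply mul_le_mul_of_nonneg_left hA (by positivity)
    _ = (m.choose r : ℝ) * (r:ℝ) ^ r * ((b:ℝ) + 1) ^ (b + 1) := by ring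
end

section
/- If r < m, then Σ_{{u,v} : u ≠ v, {u,v} ∉ E(H)} d̂(u)·d̂(v) ≥ m − r, where the sum ranges over unordered pairs of distinct vertices not adjacent in H. (In other words, at any step of the sequential algorithm at which r < m edges have been placed, the number of suitable mini-vertex pairs is at least m − r.) -/
/-- Let `H` be a spanning subgraph of `G` with `r` of the `m` edges of `G`
placed, and residual degrees `d̂(v) = deg_G v − deg_H v`.  If `r < m`, then the
number of suitable mini-vertex pairs, i.e. the sum of `d̂(u)·d̂(v)` over
unordered pairs of distinct vertices not adjacent in `H` (the edges of `Hᶜ`),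
is at least `m − r`. -/
theorem stmt11 {V : Type*} [Fintype V] [DecidableEq V]
    (G H : SimpleGraph V) [DecidableRel G.Adj] [DecidableRel H.Adj]
    (hle : H ≤ G) (dmax : ℕ) (hdeg : ∀ v, G.degree v ≤ dmax)
    (m r : ℕ) (hm : G.edgeFinset.card = m) (hr : H.edgeFinset.card = r)
    (hrm : r < m) :
    m - r ≤ ∑ e ∈ Hᶜ.edgeFinset,
        Sym2.lift ⟨fun u v => (G.degree u - H.degree u) * (G.degree v - H.degree v),
          by intros; ring⟩ e := by
  classical
  set f : Sym2 V → ℕ :=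
    Sym2.lift ⟨fun u v => (G.degree u - H.degree u) * (G.degree v - H.degree v),
      by intros; ring⟩ with hf
  have hsub : H.edgeFinset ⊆ G.edgeFinset := by
    intro e he
    rw [SimpleGraph.mem_edgeFinset] at he ⊢
    exact SimpleGraph.edgeSet_mono hle he
  set S : Finset (Sym2 V) := G.edgeFinset \ H.edgeFinset with hS
  have hScard : S.card = m - r := by
    rw [hS, Finset.card_sdiff_of_subset hsub, hm, hr]
  have hdpos : ∀ u v, G.Adj u v → ¬ H.Adj u v → 1 ≤ G.degree u - H.degree u := by
    intro u v hG hH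
    have hss : H.neighborFinset u ⊂ G.neighborFinset u := by
      constructor
      · intro w hw
        rw [SimpleGraph.mem_neighborFinset] at hw ⊢
        exact hle hw
      · intro hc
        have := hc (SimpleGraph.mem_neighborFinset _ _ _ |>.2 hG)
        rw [SimpleGraph.mem_neighborFinset] at this
        exact hH this
    have := Finset.card_lt_card hss
    simp only [SimpleGraph.degree]
    omega
  have hterm : ∀ e ∈ S, 1 ≤ f e := by
    intro e he
    induction e with
    | h u v =>
      rw [hS, Finset.mem_sdiff, SimpleGraph.mem_edgeFinset, SimpleGraph.mem_edgeFinset,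
        SimpleGraph.mem_edgeSet, SimpleGraph.mem_edgeSet] at he
      obtain ⟨hG, hH⟩ := he
      have h1 := hdpos u v hG hH
      have h2 := hdpos v u hG.symm (fun h => hH h.symm)
      simpa [hf] using Nat.mul_le_mul h1 h2
  have hSsub : S ⊆ Hᶜ.edgeFinset := by
    intro e he
    have he' := he
    rw [hS, Finset.mem_sdiff] at he'
    induction e with
    | h u v =>
      rw [SimpleGraph.mem_edgeFinset, SimpleGraph.mem_edgeSet] at he' ⊢
      rw [SimpleGraph.mem_edgeFinset, SimpleGraph.mem_edgeSet] at he'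
      obtain ⟨hG, hH⟩ := he'
      exact ⟨hG.ne, hH⟩
  calc m - r = S.card := hScard.symm
    _ = ∑ _e ∈ S, 1 := by simp
    _ ≤ ∑ e ∈ S, f e := Finset.sum_le_sum hterm
    _ ≤ ∑ e ∈ Hᶜ.edgeFinset, f e := Finset.sum_le_sum_of_subset hSsub
end

section
/- If r < m and d_max² ≤ 4m, then Σ_{{u,v} : u ≠ v, {u,v} ∉ E(H)} d̂(u)·d̂(v)·(1 − deg_G(u)·deg_G(v)/(4m)) ≥ (m − r)·(1 − d_max²/(4m)), where the sum ranges over unordered pairs of distinct vertices not adjacent in H. -/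
lemma resid_pos {V : Type*} [Fintype V] [DecidableEq V]
    (G H : SimpleGraph V) [DecidableRel G.Adj] [DecidableRel H.Adj]
    (hle : H ≤ G) {u v : V} (hG : G.Adj u v) (hH : ¬ H.Adj u v) :
    1 ≤ ((G.degree u - H.degree u : ℕ) : ℝ) := by
  have hlt : H.degree u < G.degree u := by
    apply Finset.card_lt_card
    constructor
    · intro w hw
      rw [SimpleGraph.mem_neighborFinset] at *
      exact hle hw
    · intro hsub
      have : v ∈ G.neighborFinset u := by
        rw [SimpleGraph.mem_neighborFinset]; exact hG
      have := hsub this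
      rw [SimpleGraph.mem_neighborFinset] at this
      exact hH this
  have : 1 ≤ G.degree u - H.degree u := by omega
  exact_mod_cast this

/-- Let `H` be a spanning subgraph of `G` with `r` of the `m` edges of `G`
placed, and residual degrees `d̂(v) = deg_G v − deg_H v`.  If `r < m` and
`dmax² ≤ 4m`, then the weighted number of suitable mini-vertex pairs,
`∑_{{u,v}∉E(H), u≠v} d̂(u)·d̂(v)·(1 − deg_G(u)·deg_G(v)/(4m))`,
is at least `(m − r)·(1 − dmax²/(4m))`. -/
theorem stmt12 {V : Type*} [Fintype V] [DecidableEq V]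
    (G H : SimpleGraph V) [DecidableRel G.Adj] [DecidableRel H.Adj]
    (hle : H ≤ G) (dmax : ℕ) (hdeg : ∀ v, G.degree v ≤ dmax)
    (m r : ℕ) (hm : G.edgeFinset.card = m) (hr : H.edgeFinset.card = r)
    (hrm : r < m) (hd4m : dmax ^ 2 ≤ 4 * m) :
    ((m : ℝ) - r) * (1 - (dmax : ℝ) ^ 2 / (4 * m)) ≤
      ∑ e ∈ Hᶜ.edgeFinset,
        Sym2.lift ⟨fun u v =>
          ((G.degree u - H.degree u : ℕ) : ℝ) * ((G.degree v - H.degree v : ℕ) : ℝ) *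
            (1 - (G.degree u : ℝ) * (G.degree v : ℝ) / (4 * m)),
          by intros; ring⟩ e := by
  have hm0 : 0 < m := lt_of_le_of_lt (Nat.zero_le r) hrm
  have h4m : (0:ℝ) < 4 * m := by positivity
  set c : ℝ := 1 - (dmax : ℝ) ^ 2 / (4 * m) with hc
  have hc0 : 0 ≤ c := by
    rw [hc, sub_nonneg, div_le_one h4m]
    exact_mod_cast hd4m
  have hw : ∀ u v : V, c ≤ 1 - (G.degree u : ℝ) * (G.degree v : ℝ) / (4 * m) := by
    intro u v
    rw [hc]
    gcongr
    rw [sq]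
    exact_mod_cast Nat.mul_le_mul (hdeg u) (hdeg v)
  set F : Sym2 V → ℝ := Sym2.lift ⟨fun u v =>
          ((G.degree u - H.degree u : ℕ) : ℝ) * ((G.degree v - H.degree v : ℕ) : ℝ) *
            (1 - (G.degree u : ℝ) * (G.degree v : ℝ) / (4 * m)),
          by intros; ring⟩ with hF
  have hF0 : ∀ e : Sym2 V, 0 ≤ F e := by
    intro e
    induction e using Sym2.ind with
    | _ u v =>
      rw [hF, Sym2.lift_mk]
      have h1 := le_trans hc0 (hw u v)
      positivity
  have hsub : (G \ H).edgeFinset ⊆ Hᶜ.edgeFinset := by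
    intro e
    induction e using Sym2.ind with
    | _ u v =>
      simp only [SimpleGraph.mem_edgeFinset, SimpleGraph.mem_edgeSet,
        SimpleGraph.sdiff_adj, SimpleGraph.compl_adj]
      rintro ⟨hG, hH⟩
      exact ⟨hG.ne, hH⟩
  have key : ∀ e ∈ (G \ H).edgeFinset, c ≤ F e := by
    intro e
    induction e using Sym2.ind with
    | _ u v =>
      simp only [SimpleGraph.mem_edgeFinset, SimpleGraph.mem_edgeSet,
        SimpleGraph.sdiff_adj]
      rintro ⟨hG, hH⟩
      simp only [hF, Sym2.lift_mk]
      have ha := resid_pos G H hle hG hH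
      have hb := resid_pos G H hle hG.symm (fun h => hH h.symm)
      have hwv := hw u v
      have hw0 : 0 ≤ 1 - (G.degree u : ℝ) * (G.degree v : ℝ) / (4 * m) :=
        le_trans hc0 hwv
      have h1 : (1 : ℝ) ≤ ((G.degree u - H.degree u : ℕ) : ℝ) *
          ((G.degree v - H.degree v : ℕ) : ℝ) := by nlinarith [ha, hb]
      exact hwv.trans (le_mul_of_one_le_left hw0 h1)
  calc ((m : ℝ) - r) * c
      = ((G \ H).edgeFinset.card : ℝ) * c := by
        rw [SimpleGraph.edgeFinset_sdiff,
          Finset.card_sdiff_of_subset (SimpleGraph.edgeFinset_mono hle), hm, hr,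
          Nat.cast_sub hrm.le]
    _ ≤ ∑ e ∈ (G \ H).edgeFinset, F e := by
        rw [← nsmul_eq_mul]
        exact Finset.card_nsmul_le_sum _ _ _ key
    _ ≤ ∑ e ∈ Hᶜ.edgeFinset, F e :=
        Finset.sum_le_sum_of_subset_of_nonneg hsub (fun e _ _ => hF0 e)
end

section
/- If (1/2)·Σ_{u∈V} d̂(u)·( Σ_{v∈N_H(u)} d̂(v) + d̂(u) − 1 ) > (1 − τ)·C(S,2), then there exists a vertex u with d̂(u) > 0 such that Σ_{v ∉ N_H(u)∪{u}} d̂(v) ≤ τ·(S − 1). -/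
/-- Averaging argument from the failure-probability analysis: if
`(1/2)·∑_u d̂(u)·( ∑_{v∈N_H(u)} d̂(v) + d̂(u) − 1 ) > (1 − τ)·C(S,2)`,
where `S = ∑_v d̂(v) ≥ 2`, then some vertex `u` with `d̂(u) > 0` satisfies
`∑_{v ∉ N_H(u)∪{u}} d̂(v) ≤ τ·(S − 1)`. -/
theorem stmt13 {V : Type*} [Fintype V] [DecidableEq V]
    (H : SimpleGraph V) [DecidableRel H.Adj]
    (dhat : V → ℕ) (hS : 2 ≤ ∑ v, dhat v) (τ : ℝ) (hτ : 0 < τ)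
    (hmain : (1 - τ) * (((∑ v, dhat v).choose 2 : ℕ) : ℝ) <
      (1 / 2) * ∑ u, (dhat u : ℝ) *
        ((∑ v ∈ H.neighborFinset u, (dhat v : ℝ)) + (dhat u : ℝ) - 1)) :
    ∃ u, 0 < dhat u ∧
      ∑ v ∈ (insert u (H.neighborFinset u))ᶜ, (dhat v : ℝ) ≤
        τ * ((∑ v, dhat v : ℕ) - 1 : ℝ) := by
  by_contra hc
  push_neg at hc
  set Sr : ℝ := ((∑ v, dhat v : ℕ) : ℝ) with hSr
  set f : V → ℝ := fun u => ∑ v ∈ (insert u (H.neighborFinset u))ᶜ, (dhat v : ℝ) with hf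
  have hterm : ∀ u : V,
      (∑ v ∈ H.neighborFinset u, (dhat v : ℝ)) + (dhat u : ℝ) - 1 = Sr - 1 - f u := by
    intro u
    have h1 : ∑ v ∈ insert u (H.neighborFinset u), (dhat v : ℝ)
        = (dhat u : ℝ) + ∑ v ∈ H.neighborFinset u, (dhat v : ℝ) :=
      Finset.sum_insert (H.notMem_neighborFinset_self u)
    have h2 : ∑ v ∈ insert u (H.neighborFinset u), (dhat v : ℝ) + f u = Sr := by
      rw [hf]
      simpa [hSr, Nat.cast_sum] using
        Finset.sum_add_sum_compl (insert u (H.neighborFinset u)) (fun v => (dhat v : ℝ))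
    linarith
  -- existence of a vertex with positive weight
  obtain ⟨u0, hu0⟩ : ∃ u, 0 < dhat u := by
    by_contra h
    push_neg at h
    have : ∑ v, dhat v = 0 := Finset.sum_eq_zero (fun v _ => Nat.le_zero.mp (h v))
    omega
  have hSpos : (0:ℝ) ≤ Sr - 1 := by
    have h1 : (1:ℝ) ≤ ((∑ v, dhat v : ℕ) : ℝ) := Nat.one_le_cast.mpr (by omega)
    simp only [hSr]; linarith
  -- strict sum inequality
  have hkey : ∑ u, (dhat u : ℝ) * (Sr - 1 - f u)
      < ∑ u, (dhat u : ℝ) * ((1 - τ) * (Sr - 1)) := by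
    apply Finset.sum_lt_sum
    · intro u _
      rcases Nat.eq_zero_or_pos (dhat u) with h | h
      · simp [h]
      · have hfu := hc u h
        have hdu : (0:ℝ) < (dhat u : ℝ) := Nat.cast_pos.mpr h
        nlinarith
    · exact ⟨u0, Finset.mem_univ u0, by
        have hfu := hc u0 hu0
        have hdu : (0:ℝ) < (dhat u0 : ℝ) := Nat.cast_pos.mpr hu0
        nlinarith⟩
  have hsum2 : ∑ u, (dhat u : ℝ) * ((1 - τ) * (Sr - 1)) = Sr * ((1 - τ) * (Sr - 1)) := by
    rw [← Finset.sum_mul]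
    simp [hSr, Nat.cast_sum]
  have hchoose : (((∑ v, dhat v).choose 2 : ℕ) : ℝ) = Sr * (Sr - 1) / 2 := by
    rw [Nat.cast_choose_two]
  have hmain' : (1 - τ) * (Sr * (Sr - 1) / 2)
      < (1 / 2) * ∑ u, (dhat u : ℝ) * (Sr - 1 - f u) := by
    rw [← hchoose]
    calc (1 - τ) * (((∑ v, dhat v).choose 2 : ℕ) : ℝ) < _ := hmain
    _ = (1 / 2) * ∑ u, (dhat u : ℝ) * (Sr - 1 - f u) := by
        congr 1
        exact Finset.sum_congr rfl (fun u _ => by rw [hterm u])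
  rw [hsum2] at hkey
  nlinarith
end

section
/- The number of simple graphs on V with degree function c whose edge set contains every pair of distinct elements of K (i.e. which contain the complete graph on K as a subgraph) is at most the number of simple graphs on V with degree function c'. -/
/-- Let `K ⊆ V` with `|K| = k ≥ 1` and `c : V → ℕ` with `c v ≥ k − 1` on `K`.
The number of simple graphs on `V` with degree function `c` that contain the
complete graph on `K` is at most the number of simple graphs on `V` with
degree function `c'`, where `c'` subtracts `k − 1` from `c` on `K`. -/
theorem stmt16 {V : Type*} [Fintype V] [DecidableEq V]
    (K : Finset V) (k : ℕ) (hk : K.card = k) (hk1 : 1 ≤ k)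
    (c : V → ℕ) (hc : ∀ v ∈ K, k - 1 ≤ c v) :
    Nat.card {G : SimpleGraph V //
        (∀ v, (G.neighborSet v).ncard = c v) ∧
        ∀ u ∈ K, ∀ v ∈ K, u ≠ v → G.Adj u v} ≤
      Nat.card {G : SimpleGraph V //
        ∀ v, (G.neighborSet v).ncard = if v ∈ K then c v - (k - 1) else c v} := by
  classical
  -- the complete graph on K
  let S : SimpleGraph V :=
    { Adj := fun u v => u ≠ v ∧ u ∈ K ∧ v ∈ K
      symm := by constructor; intro u v h; exact ⟨h.1.symm, h.2.2, h.2.1⟩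
      loopless := by constructor; intro v h; exact h.1 rfl }
  have hSnb : ∀ v, S.neighborSet v = if v ∈ K then (↑K \ {v} : Set V) else ∅ := by
    intro v
    ext u
    by_cases hv : v ∈ K <;> simp [hv, SimpleGraph.neighborSet, S, and_comm, eq_comm, Ne]
  have key : ∀ G : SimpleGraph V,
      ((∀ v, (G.neighborSet v).ncard = c v) ∧
        ∀ u ∈ K, ∀ v ∈ K, u ≠ v → G.Adj u v) →
      ∀ v, ((G \ S).neighborSet v).ncard = if v ∈ K then c v - (k - 1) else c v := by
    intro G ⟨hdeg, hcomp⟩ v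
    have hnb : (G \ S).neighborSet v = G.neighborSet v \ S.neighborSet v := by
      ext u; simp [SimpleGraph.neighborSet]
    by_cases hv : v ∈ K
    · have hsub : S.neighborSet v ⊆ G.neighborSet v := by
        rw [hSnb v]; simp only [hv, if_true]
        intro u hu
        simp only [Set.mem_diff, Set.mem_singleton_iff, Finset.mem_coe] at hu
        exact hcomp v hv u hu.1 (Ne.symm hu.2)
      have hcard : (S.neighborSet v).ncard = k - 1 := by
        rw [hSnb v]; simp only [hv, if_true]
        rw [show (↑K \ {v} : Set V) = ↑(K.erase v) by simp [Finset.coe_erase]]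
        rw [Set.ncard_coe_finset, Finset.card_erase_of_mem hv, hk]
      rw [hnb, Set.ncard_diff hsub (Set.toFinite _), hdeg, hcard, if_pos hv]
    · rw [hnb, hSnb v, if_neg hv, if_neg hv, Set.diff_empty, hdeg]
  let f : {G : SimpleGraph V //
        (∀ v, (G.neighborSet v).ncard = c v) ∧
        ∀ u ∈ K, ∀ v ∈ K, u ≠ v → G.Adj u v} →
      {G : SimpleGraph V //
        ∀ v, (G.neighborSet v).ncard = if v ∈ K then c v - (k - 1) else c v} :=
    fun G => ⟨G.1 \ S, key G.1 G.2⟩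
  have hinj : Function.Injective f := by
    rintro ⟨G₁, h₁⟩ ⟨G₂, h₂⟩ h
    have h' : G₁ \ S = G₂ \ S := congrArg Subtype.val h
    ext u v
    have hiff : ∀ (G : SimpleGraph V),
        (∀ u ∈ K, ∀ v ∈ K, u ≠ v → G.Adj u v) →
        (G.Adj u v ↔ (G \ S).Adj u v ∨ S.Adj u v) := by
      intro G hcomp
      constructor
      · intro hGA
        by_cases hS : S.Adj u v
        · exact Or.inr hS
        · exact Or.inl ⟨hGA, hS⟩
      · rintro (⟨hGA, _⟩ | hS)
        · exact hGA
        · exact hcomp u hS.2.1 v hS.2.2 hS.1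
    rw [hiff G₁ h₁.2, hiff G₂ h₂.2, h']
  exact Nat.card_le_card_of_injective f hinj
end

section
/- Let n' = |{v : d̂(v) > 0}| be the number of vertices with positive residual degree. Then Σ_v C(d̂(v),2) + Σ_{{u,v}∈E(H)} d̂(u)·d̂(v) ≤ (1/2)·Σ_v d̂(v)²·( min(n', deg_G(v)+1) − d̂(v) ) − (m − r), where the left-hand side counts the unsuitable mini-vertex pairs (self-loop pairs plus double-edge pairs) at step r. -/
open Finset SimpleGraph

lemma dartSum {V : Type*} [Fintype V] [DecidableEq V] (H : SimpleGraph V)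
    [DecidableRel H.Adj] (f : V → V → ℝ) :
    ∑ d : H.Dart, f d.fst d.snd = ∑ v, ∑ u ∈ H.neighborFinset v, f v u := by
  rw [← Finset.sum_fiberwise (univ : Finset H.Dart) (fun d => d.fst) (fun d => f d.fst d.snd)]
  refine Finset.sum_congr rfl fun v _ => ?_
  have h1 : (univ.filter fun d : H.Dart => d.fst = v) = univ.image (H.dartOfNeighborSet v) :=
    H.dart_fst_fiber v
  rw [h1, Finset.sum_image (fun a _ b _ h => H.dartOfNeighborSet_injective v h)]
  simp only [dartOfNeighborSet_toProd]
  rw [neighborFinset_def, ← Finset.sum_set_coe (f := fun u => f v u)]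

lemma dartSum2 {V : Type*} [Fintype V] [DecidableEq V] (H : SimpleGraph V)
    [DecidableRel H.Adj] (f : V → V → ℝ) (hf : ∀ u v, f u v = f v u) :
    ∑ d : H.Dart, f d.fst d.snd
      = 2 * ∑ e ∈ H.edgeFinset, Sym2.lift ⟨f, hf⟩ e := by
  rw [← Finset.sum_fiberwise_of_maps_to (t := H.edgeFinset) (g := fun d : H.Dart => d.edge)
    (fun d _ => by rw [mem_edgeFinset]; exact d.edge_mem) (fun d => f d.fst d.snd),
    Finset.mul_sum]
  refine Finset.sum_congr rfl fun e he => ?_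
  rw [mem_edgeFinset] at he
  induction' e with v w
  let d : H.Dart := ⟨(v, w), he⟩
  have h2 : (univ.filter fun d' : H.Dart => d'.edge = d.edge) = {d, d.symm} := d.edge_fiber
  have h3 : d.edge = s(v, w) := rfl
  rw [h3] at h2
  rw [h2, Finset.sum_pair d.symm_ne.symm]
  have h4 : Sym2.lift ⟨f, hf⟩ s(v, w) = f v w := rfl
  rw [h4]
  show f v w + f w v = 2 * f v w
  rw [hf w v]; ring



/-- Let `H` be a spanning subgraph of `G` with `r` of the `m` edges of `G`
placed, residual degrees `d̂(v) = deg_G v − deg_H v`, and let `n'` be the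
number of vertices with positive residual degree.  Then the number of
unsuitable mini-vertex pairs (self-loop pairs plus double-edge pairs)
satisfies
`∑_v C(d̂(v),2) + ∑_{{u,v}∈E(H)} d̂(u)·d̂(v)
  ≤ (1/2)·∑_v d̂(v)²·(min(n', deg_G(v)+1) − d̂(v)) − (m − r)`. -/
theorem stmt17 {V : Type*} [Fintype V] [DecidableEq V]
    (G H : SimpleGraph V) [DecidableRel G.Adj] [DecidableRel H.Adj]
    (hle : H ≤ G)
    (m r : ℕ) (hm : G.edgeFinset.card = m) (hr : H.edgeFinset.card = r) :
    (∑ v, (((G.degree v - H.degree v).choose 2 : ℕ) : ℝ)) +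
      ∑ e ∈ H.edgeFinset,
        Sym2.lift ⟨fun u v =>
          ((G.degree u - H.degree u : ℕ) : ℝ) * ((G.degree v - H.degree v : ℕ) : ℝ),
          by intros; ring⟩ e
      ≤ (1 / 2) * ∑ v, ((G.degree v - H.degree v : ℕ) : ℝ) ^ 2 *
          ((min ((Finset.univ.filter fun u => 0 < G.degree u - H.degree u).card)
              (G.degree v + 1) : ℕ) - ((G.degree v - H.degree v : ℕ) : ℝ))
        - ((m : ℝ) - r) := by
  classical
  -- abbreviations
  have hadj : ∀ {a b}, H.Adj a b → G.Adj a b := fun h => hle h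
  set d : V → ℕ := fun v => G.degree v - H.degree v with hd
  set D : V → ℝ := fun v => ((d v : ℕ) : ℝ) with hD
  have hdeg : ∀ v, H.degree v ≤ G.degree v := fun v =>
    Finset.card_le_card fun u hu => by
      rw [SimpleGraph.mem_neighborFinset] at hu ⊢; exact hadj hu
  have hDcast : ∀ v, D v = (G.degree v : ℝ) - (H.degree v : ℝ) := fun v => by
    simp only [hD, hd]; rw [Nat.cast_sub (hdeg v)]
  set S : Finset V := Finset.univ.filter (fun u => 0 < d u) with hS
  set T : V → Finset V := fun v => (H.neighborFinset v).filter (fun u => 0 < d u) with hT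
  -- sum of residual degrees
  have hsumD : ∑ v, D v = 2 * (m : ℝ) - 2 * r := by
    have h1 : ∑ v, (G.degree v : ℝ) = 2 * m := by
      rw [← Nat.cast_sum]
      norm_cast
      rw [G.sum_degrees_eq_twice_card_edges, hm]
    have h2 : ∑ v, (H.degree v : ℝ) = 2 * r := by
      rw [← Nat.cast_sum]
      norm_cast
      rw [H.sum_degrees_eq_twice_card_edges, hr]
    calc ∑ v, D v = ∑ v, ((G.degree v : ℝ) - (H.degree v : ℝ)) :=
          Finset.sum_congr rfl fun v _ => hDcast v
      _ = 2 * (m : ℝ) - 2 * r := by rw [Finset.sum_sub_distrib, h1, h2]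
  -- choose sum
  have hchoose : ∑ v, (((d v).choose 2 : ℕ) : ℝ)
      = (1/2) * ∑ v, D v ^ 2 - ((m : ℝ) - r) := by
    have : ∀ v : V, (((d v).choose 2 : ℕ) : ℝ) = (D v ^ 2 - D v) / 2 := fun v => by
      rw [Nat.cast_choose_two]; simp only [hD]; ring
    rw [Finset.sum_congr rfl fun v _ => this v, ← Finset.sum_div,
      Finset.sum_sub_distrib, hsumD]
    ring
  -- edge sum via darts
  have hedge : ∑ e ∈ H.edgeFinset,
        Sym2.lift ⟨fun u v => D u * D v, by intros; ring⟩ e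
      = (1/2) * ∑ v, ∑ u ∈ H.neighborFinset v, D v * D u := by
    have h2 := dartSum2 H (fun u v => D u * D v) (by intros; ring)
    have h1 := dartSum H (fun u v => D u * D v)
    rw [h1] at h2
    have : ∑ v, ∑ u ∈ H.neighborFinset v, D v * D u
        = ∑ v, ∑ u ∈ H.neighborFinset v, D u * D v := by
      refine Finset.sum_congr rfl fun v _ => Finset.sum_congr rfl fun u _ => by ring
    rw [this] at h2
    linarith
  -- restrict inner sums to T, outer to S
  have hinner : ∀ v, ∑ u ∈ H.neighborFinset v, D v * D u = ∑ u ∈ T v, D v * D u := by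
    intro v
    rw [hT]
    rw [Finset.sum_filter_of_ne]
    intro u _ hne
    by_contra h
    push_neg at h
    have : d u = 0 := Nat.le_zero.mp h
    apply hne
    simp [hD, this]
  have houter : ∑ v, ∑ u ∈ T v, D v * D u = ∑ v ∈ S, ∑ u ∈ T v, D v * D u := by
    rw [hS, Finset.sum_filter_of_ne]
    intro v _ hne
    by_contra h
    push_neg at h
    have : d v = 0 := Nat.le_zero.mp h
    apply hne
    simp [hD, this]
  -- symmetric swap: A = B
  have hswap : ∑ v ∈ S, ∑ u ∈ T v, D u ^ 2 = ∑ v ∈ S, ∑ u ∈ T v, D v ^ 2 := by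
    refine Finset.sum_comm' fun x y => ?_
    simp only [hS, hT, Finset.mem_filter, Finset.mem_univ, true_and,
      SimpleGraph.mem_neighborFinset]
    constructor
    · rintro ⟨hx, hxy, hy⟩; exact ⟨⟨H.adj_symm hxy, hx⟩, hy⟩
    · rintro ⟨⟨hxy, hx⟩, hy⟩; exact ⟨hx, H.adj_symm hxy, hy⟩
  -- AM-GM bound
  have hamgm : ∑ v ∈ S, ∑ u ∈ T v, D v * D u ≤ ∑ v ∈ S, (T v).card * D v ^ 2 := by
    have step : ∑ v ∈ S, ∑ u ∈ T v, D v * D u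
        ≤ (1/2) * (∑ v ∈ S, ∑ u ∈ T v, D u ^ 2 + ∑ v ∈ S, ∑ u ∈ T v, D v ^ 2) := by
      rw [← Finset.sum_add_distrib]
      rw [Finset.mul_sum]
      refine Finset.sum_le_sum fun v _ => ?_
      rw [← Finset.sum_add_distrib, Finset.mul_sum]
      refine Finset.sum_le_sum fun u _ => ?_
      nlinarith [sq_nonneg (D v - D u)]
    rw [hswap] at step
    calc ∑ v ∈ S, ∑ u ∈ T v, D v * D u ≤ _ := step
      _ = ∑ v ∈ S, (T v).card * D v ^ 2 := by
        rw [← two_mul, ← mul_assoc]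
        have h12 : (1/2 : ℝ) * 2 = 1 := by norm_num
        rw [h12, one_mul]
        exact Finset.sum_congr rfl fun v _ => by rw [Finset.sum_const, nsmul_eq_mul]
  -- cardinality bounds on T
  have hcard : ∀ v ∈ S, (T v).card + d v + 1
      ≤ min S.card (G.degree v + 1) := by
    intro v hv
    rw [hS, Finset.mem_filter] at hv
    have hvpos : 0 < d v := hv.2
    refine le_min ?_ ?_
    · -- ≤ n'
      set R : Finset V := G.neighborFinset v \ H.neighborFinset v with hR
      have hcardR : R.card = d v := by
        rw [hR, Finset.card_sdiff_of_subset]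
        · rfl
        · intro u hu; rw [SimpleGraph.mem_neighborFinset] at hu ⊢; exact hadj hu
      have hsub : insert v (T v ∪ R) ⊆ S := by
        intro u hu
        rw [Finset.mem_insert, Finset.mem_union] at hu
        rw [hS, Finset.mem_filter]
        refine ⟨Finset.mem_univ u, ?_⟩
        rcases hu with rfl | hu | hu
        · exact hvpos
        · exact (Finset.mem_filter.mp hu).2
        · rw [hR, Finset.mem_sdiff, SimpleGraph.mem_neighborFinset,
            SimpleGraph.mem_neighborFinset] at hu
          have : v ∈ G.neighborFinset u \ H.neighborFinset u := by
            rw [Finset.mem_sdiff, SimpleGraph.mem_neighborFinset,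
              SimpleGraph.mem_neighborFinset]
            exact ⟨G.adj_symm hu.1, fun h => hu.2 (H.adj_symm h)⟩
          have hpos : 0 < (G.neighborFinset u \ H.neighborFinset u).card :=
            Finset.card_pos.mpr ⟨v, this⟩
          rwa [Finset.card_sdiff_of_subset (fun w hw => by
            rw [SimpleGraph.mem_neighborFinset] at hw ⊢; exact hadj hw)] at hpos
      have hdisj : Disjoint (T v) R := by
        refine Finset.disjoint_left.mpr fun u hu hu' => ?_
        rw [hR, Finset.mem_sdiff] at hu'
        exact hu'.2 (Finset.mem_of_mem_filter u hu)
      have hvnot : v ∉ T v ∪ R := by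
        rw [Finset.mem_union]
        rintro (h | h)
        · exact H.notMem_neighborFinset_self v (Finset.mem_of_mem_filter v h)
        · rw [hR, Finset.mem_sdiff, SimpleGraph.mem_neighborFinset] at h
          exact G.loopless.irrefl v h.1
      have := Finset.card_le_card hsub
      rwa [Finset.card_insert_of_notMem hvnot, Finset.card_union_of_disjoint hdisj,
        hcardR] at this
    · -- ≤ deg + 1
      have h1 : (T v).card ≤ H.degree v := Finset.card_filter_le _ _
      have hdv : d v = G.degree v - H.degree v := rfl
      have h2 := hdeg v
      omega
  -- cast card bound to ℝ
  have hTb : ∀ v ∈ S, ((T v).card : ℝ)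
      ≤ ((min S.card (G.degree v + 1) : ℕ) : ℝ) - D v - 1 := by
    intro v hv
    have hx := hcard v hv
    have hy : (((T v).card + d v + 1 : ℕ) : ℝ)
        ≤ ((min S.card (G.degree v + 1) : ℕ) : ℝ) := Nat.cast_le.mpr hx
    rw [Nat.cast_add, Nat.cast_add, Nat.cast_one] at hy
    simp only [hD]
    linarith
  have hfinal : ∑ v ∈ S, ((T v).card : ℝ) * D v ^ 2
      ≤ ∑ v ∈ S, D v ^ 2 * (((min S.card (G.degree v + 1) : ℕ) : ℝ) - D v - 1) := by
    refine Finset.sum_le_sum fun v hv => ?_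
    have := hTb v hv
    nlinarith [sq_nonneg (D v)]
  have hext : ∑ v ∈ S, D v ^ 2 * (((min S.card (G.degree v + 1) : ℕ) : ℝ) - D v - 1)
      = ∑ v, D v ^ 2 * (((min S.card (G.degree v + 1) : ℕ) : ℝ) - D v - 1) := by
    refine Finset.sum_subset (Finset.filter_subset _ _) fun v _ hv => ?_
    have : d v = 0 := by
      by_contra h
      exact hv (by rw [hS, Finset.mem_filter]; exact ⟨Finset.mem_univ v, Nat.pos_of_ne_zero h⟩)
    simp [hD, this]
  have hsplit : ∑ v, D v ^ 2 * (((min S.card (G.degree v + 1) : ℕ) : ℝ) - D v - 1)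
      = ∑ v, D v ^ 2 * (((min S.card (G.degree v + 1) : ℕ) : ℝ) - D v) - ∑ v, D v ^ 2 := by
    rw [← Finset.sum_sub_distrib]
    exact Finset.sum_congr rfl fun v _ => by ring
  -- final assembly
  have hP : ∑ v, ∑ u ∈ H.neighborFinset v, D v * D u
      = ∑ v ∈ S, ∑ u ∈ T v, D v * D u := by
    rw [Finset.sum_congr rfl fun v _ => hinner v, houter]
  rw [hP] at hedge
  show (∑ v, (((d v).choose 2 : ℕ) : ℝ)) +
      ∑ e ∈ H.edgeFinset,
        Sym2.lift ⟨fun u v => D u * D v, by intros; ring⟩ e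
      ≤ (1 / 2) * ∑ v, D v ^ 2 *
          (((min S.card (G.degree v + 1) : ℕ) : ℝ) - D v)
        - ((m : ℝ) - r)
  rw [hchoose, hedge]
  have hchain : ∑ v ∈ S, ∑ u ∈ T v, D v * D u
      ≤ ∑ v, D v ^ 2 * (((min S.card (G.degree v + 1) : ℕ) : ℝ) - D v) - ∑ v, D v ^ 2 := by
    calc ∑ v ∈ S, ∑ u ∈ T v, D v * D u ≤ ∑ v ∈ S, ((T v).card : ℝ) * D v ^ 2 := hamgm
      _ ≤ _ := hfinal
      _ = _ := hext
      _ = _ := hsplit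
  linarith
end
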